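/- Let (K_n) be a sequence of random formal contexts with K_n distributed according to κ_{n,1/2,1/2}. Then for all sufficiently large n, the expected number of formal concepts satisfies E[|𝔅(K_n)|] > n^{log n}, where log denotes the natural logarithm. -/

import Mathlib

open Finset

/-- For a formal context with object set `G ⊆ {1,…,n}`, attribute set `Gᶜ` and incidence
relation `I ⊆ G × Gᶜ`: the set `A'` of attributes shared by all objects in `A`. -/
def extentDeriv (n : ℕ) (G : Finset (Fin n)) (I : Finset (Fin n × Fin n))
    (A : Finset (Fin n)) : Finset (Fin n) :=
  Gᶜ.filter fun m => ∀ g ∈ A, (g, m) ∈ I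

/-- The set `B'` of objects having all attributes in `B`. -/
def intentDeriv (n : ℕ) (G : Finset (Fin n)) (I : Finset (Fin n × Fin n))
    (B : Finset (Fin n)) : Finset (Fin n) :=
  G.filter fun g => ∀ m ∈ B, (g, m) ∈ I

/-- `(A, B)` is a formal concept of the context `(G, Gᶜ, I)`. -/
def IsConcept (n : ℕ) (G : Finset (Fin n)) (I : Finset (Fin n × Fin n))
    (A B : Finset (Fin n)) : Prop :=
  A ⊆ G ∧ B ⊆ Gᶜ ∧ extentDeriv n G I A = B ∧ intentDeriv n G I B = A

instance (n : ℕ) (G : Finset (Fin n)) (I : Finset (Fin n × Fin n)) (A B : Finset (Fin n)) :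
    Decidable (IsConcept n G I A B) := by
  unfold IsConcept; infer_instance

/-- The number `|𝔅(K)|` of formal concepts of the context `K = (G, Gᶜ, I)`. -/
def numConcepts (n : ℕ) (G : Finset (Fin n)) (I : Finset (Fin n × Fin n)) : ℕ :=
  (Finset.univ.filter fun AB : Finset (Fin n) × Finset (Fin n) =>
    IsConcept n G I AB.1 AB.2).card

/-- The probability `κ_{n,p,q}{(G, Gᶜ, I)}` of a single context. -/
noncomputable def kappa (n : ℕ) (p q : ℝ) (G : Finset (Fin n))
    (I : Finset (Fin n × Fin n)) : ℝ :=
  p ^ G.card * (1 - p) ^ Gᶜ.card * q ^ I.card * (1 - q) ^ ((G ×ˢ Gᶜ).card - I.card)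

/-- The expected number of formal concepts `E[|𝔅(K)|]` for `K ~ κ_{n,p,q}`:
the sum over the finite sample space `Ω_n` (all contexts `(G, Gᶜ, I)` with
`I ⊆ G × Gᶜ`) of the number of concepts weighted by `κ_{n,p,q}`. -/
noncomputable def expectedConcepts (n : ℕ) (p q : ℝ) : ℝ :=
  ∑ G : Finset (Fin n), ∑ I ∈ (G ×ˢ Gᶜ).powerset,
    (numConcepts n G I : ℝ) * kappa n p q G I

set_option maxHeartbeats 1600000

open Finset

lemma mem_psi {α β : Type*} [DecidableEq α] [DecidableEq β] {C : Finset β}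
    (u : ↥C → Finset α) (a : α) (m : β) :
    ((a, m) ∈ C.attach.biUnion fun x => (u x).image fun b => (b, (x : β))) ↔
      ∃ h : m ∈ C, a ∈ u ⟨m, h⟩ := by
  simp only [mem_biUnion, mem_attach, true_and, mem_image, Prod.mk.injEq]
  constructor
  · rintro ⟨x, b, hb, rfl, rfl⟩; exact ⟨x.2, by simpa using hb⟩
  · rintro ⟨h, ha⟩; exact ⟨⟨m, h⟩, a, ha, rfl, rfl⟩

lemma card_nonfull_cols {α β : Type*} [DecidableEq α] [DecidableEq β]
    (A : Finset α) (C : Finset β) :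
    (2 ^ A.card - 1) ^ C.card ≤ ((A ×ˢ C).powerset.filter
      (fun F => ∀ m ∈ C, ∃ a ∈ A, (a, m) ∉ F)).card := by
  classical
  have hcard : (2 ^ A.card - 1) ^ C.card
      = Fintype.card (↥C → ↥(A.powerset.erase A)) := by
    rw [Fintype.card_fun, Fintype.card_coe, Fintype.card_coe,
      card_erase_of_mem (mem_powerset_self A), card_powerset]
  rw [hcard, ← Finset.card_univ]
  apply Finset.card_le_card_of_injOn
    (fun u => C.attach.biUnion fun x => ((u x : Finset α)).image fun b => (b, (x : β)))
  · intro u _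
    have hsub : ∀ x : ↥C, (u x : Finset α) ⊆ A := fun x =>
      mem_powerset.mp (mem_of_mem_erase (u x).2)
    rw [mem_coe, mem_filter, mem_powerset]
    constructor
    · intro p hp
      obtain ⟨a, m⟩ := p
      rw [mem_psi] at hp
      obtain ⟨h, ha⟩ := hp
      exact mem_product.mpr ⟨hsub _ ha, h⟩
    · intro m hm
      have hne : (u ⟨m, hm⟩ : Finset α) ≠ A := (mem_erase.mp (u ⟨m, hm⟩).2).1
      obtain ⟨a, haA, hau⟩ := exists_of_ssubset (lt_of_le_of_ne (hsub _) hne)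
      refine ⟨a, haA, fun hc => ?_⟩
      rw [mem_psi] at hc
      obtain ⟨h, ha⟩ := hc
      exact hau ha
  · intro u₁ _ u₂ _ heq
    beta_reduce at heq
    funext x
    apply Subtype.ext
    ext a
    constructor
    · intro ha
      have : (a, (x:β)) ∈ C.attach.biUnion fun y => (u₁ y : Finset α).image fun b => (b, (y:β)) :=
        (mem_psi (fun y => ((u₁ y : Finset α))) a _).mpr ⟨x.2, by simpa using ha⟩
      rw [heq, mem_psi] at this
      obtain ⟨h, hh⟩ := this; simpa using hh
    · intro ha
      have : (a, (x:β)) ∈ C.attach.biUnion fun y => (u₂ y : Finset α).image fun b => (b, (y:β)) :=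
        (mem_psi (fun y => ((u₂ y : Finset α))) a _).mpr ⟨x.2, by simpa using ha⟩
      rw [← heq, mem_psi] at this
      obtain ⟨h, hh⟩ := this; simpa using hh

open Finset

lemma mem_psi' {α β : Type*} [DecidableEq α] [DecidableEq β] {C : Finset β}
    (u : ↥C → Finset α) (a : α) (m : β) :
    ((m, a) ∈ C.attach.biUnion fun x => (u x).image fun b => ((x : β), b)) ↔
      ∃ h : m ∈ C, a ∈ u ⟨m, h⟩ := by
  simp only [mem_biUnion, mem_attach, true_and, mem_image, Prod.mk.injEq]
  constructor
  · rintro ⟨x, b, hb, rfl, rfl⟩; exact ⟨x.2, by simpa using hb⟩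
  · rintro ⟨h, ha⟩; exact ⟨⟨m, h⟩, a, ha, rfl, rfl⟩

lemma card_nonfull_rows {α β : Type*} [DecidableEq α] [DecidableEq β]
    (A : Finset α) (C : Finset β) :
    (2 ^ A.card - 1) ^ C.card ≤ ((C ×ˢ A).powerset.filter
      (fun F => ∀ m ∈ C, ∃ a ∈ A, (m, a) ∉ F)).card := by
  classical
  have hcard : (2 ^ A.card - 1) ^ C.card
      = Fintype.card (↥C → ↥(A.powerset.erase A)) := by
    rw [Fintype.card_fun, Fintype.card_coe, Fintype.card_coe,
      card_erase_of_mem (mem_powerset_self A), card_powerset]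
  rw [hcard, ← Finset.card_univ]
  apply Finset.card_le_card_of_injOn
    (fun u => C.attach.biUnion fun x => ((u x : Finset α)).image fun b => ((x : β), b))
  · intro u _
    have hsub : ∀ x : ↥C, (u x : Finset α) ⊆ A := fun x =>
      mem_powerset.mp (mem_of_mem_erase (u x).2)
    rw [mem_coe, mem_filter, mem_powerset]
    constructor
    · intro p hp
      obtain ⟨m, a⟩ := p
      rw [mem_psi'] at hp
      obtain ⟨h, ha⟩ := hp
      exact mem_product.mpr ⟨h, hsub _ ha⟩
    · intro m hm
      have hne : (u ⟨m, hm⟩ : Finset α) ≠ A := (mem_erase.mp (u ⟨m, hm⟩).2).1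
      obtain ⟨a, haA, hau⟩ := exists_of_ssubset (lt_of_le_of_ne (hsub _) hne)
      refine ⟨a, haA, fun hc => ?_⟩
      rw [mem_psi'] at hc
      obtain ⟨h, ha⟩ := hc
      exact hau ha
  · intro u₁ _ u₂ _ heq
    beta_reduce at heq
    funext x
    apply Subtype.ext
    ext a
    constructor
    · intro ha
      have : ((x:β), a) ∈ C.attach.biUnion fun y => (u₁ y : Finset α).image fun b => ((y:β), b) :=
        (mem_psi' (fun y => ((u₁ y : Finset α))) a _).mpr ⟨x.2, by simpa using ha⟩
      rw [heq, mem_psi'] at this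
      obtain ⟨h, hh⟩ := this; simpa using hh
    · intro ha
      have : ((x:β), a) ∈ C.attach.biUnion fun y => (u₂ y : Finset α).image fun b => ((y:β), b) :=
        (mem_psi' (fun y => ((u₂ y : Finset α))) a _).mpr ⟨x.2, by simpa using ha⟩
      rw [← heq, mem_psi'] at this
      obtain ⟨h, hh⟩ := this; simpa using hh

lemma concept_count (n : ℕ) (G A B : Finset (Fin n)) (hA : A ⊆ G) (hB : B ⊆ Gᶜ) :
    2 ^ ((G \ A).card * (Gᶜ \ B).card) *
      ((2 ^ A.card - 1) ^ (Gᶜ \ B).card * (2 ^ B.card - 1) ^ (G \ A).card)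
      ≤ ((G ×ˢ Gᶜ).powerset.filter fun I => IsConcept n G I A B).card := by
  classical
  set blkJ := (G \ A) ×ˢ (Gᶜ \ B) with hblkJ
  set blkF := A ×ˢ (Gᶜ \ B) with hblkF
  set blkH := (G \ A) ×ˢ B with hblkH
  set P1 := blkJ.powerset with hP1
  set P2 := blkF.powerset.filter fun F => ∀ m ∈ Gᶜ \ B, ∃ a ∈ A, (a, m) ∉ F with hP2
  set P3 := blkH.powerset.filter fun H => ∀ g ∈ G \ A, ∃ b ∈ B, (g, b) ∉ H with hP3
  have h1 : 2 ^ ((G \ A).card * (Gᶜ \ B).card) = P1.card := by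
    rw [hP1, card_powerset, hblkJ, card_product]
  have h2 : (2 ^ A.card - 1) ^ (Gᶜ \ B).card ≤ P2.card := by
    rw [hP2, hblkF]
    have := card_nonfull_cols A (Gᶜ \ B)
    convert this using 3
  have h3 : (2 ^ B.card - 1) ^ (G \ A).card ≤ P3.card := by
    rw [hP3, hblkH]
    have := card_nonfull_rows B (G \ A)
    convert this using 3
  calc 2 ^ ((G \ A).card * (Gᶜ \ B).card) *
      ((2 ^ A.card - 1) ^ (Gᶜ \ B).card * (2 ^ B.card - 1) ^ (G \ A).card)
      ≤ P1.card * (P2.card * P3.card) := by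
        rw [h1]; exact Nat.mul_le_mul_left _ (Nat.mul_le_mul h2 h3)
    _ = (P1 ×ˢ P2 ×ˢ P3).card := by rw [card_product, card_product]
    _ ≤ _ := ?_
  apply Finset.card_le_card_of_injOn (fun x => A ×ˢ B ∪ x.1 ∪ x.2.1 ∪ x.2.2)
  · rintro ⟨J, F, H⟩ hx
    simp only [mem_coe, mem_product] at hx
    obtain ⟨hJ, hF, hH⟩ := hx
    have hJ' : J ⊆ blkJ := mem_powerset.mp hJ
    rw [hP2, mem_filter] at hF
    obtain ⟨hF', hFc⟩ := hF
    have hF' : F ⊆ blkF := mem_powerset.mp hF'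
    rw [hP3, mem_filter] at hH
    obtain ⟨hH', hHc⟩ := hH
    have hH' : H ⊆ blkH := mem_powerset.mp hH'
    -- membership decomposition facts
    have hJm : ∀ p ∈ J, p.1 ∈ G \ A ∧ p.2 ∈ Gᶜ \ B := fun p hp =>
      mem_product.mp (hJ' hp)
    have hFm : ∀ p ∈ F, p.1 ∈ A ∧ p.2 ∈ Gᶜ \ B := fun p hp =>
      mem_product.mp (hF' hp)
    have hHm : ∀ p ∈ H, p.1 ∈ G \ A ∧ p.2 ∈ B := fun p hp =>
      mem_product.mp (hH' hp)
    simp only [mem_coe, mem_filter, mem_powerset]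
    refine ⟨?_, hA, hB, ?_, ?_⟩
    · -- U ⊆ G ×ˢ Gᶜ
      intro p hp
      rw [mem_product]
      rcases mem_union.mp hp with hp | hp
      · rcases mem_union.mp hp with hp | hp
        · rcases mem_union.mp hp with hp | hp
          · obtain ⟨h1', h2'⟩ := mem_product.mp hp
            exact ⟨hA h1', hB h2'⟩
          · obtain ⟨h1', h2'⟩ := hJm p hp
            exact ⟨(mem_sdiff.mp h1').1, (mem_sdiff.mp h2').1⟩
        · obtain ⟨h1', h2'⟩ := hFm p hp
          exact ⟨hA h1', (mem_sdiff.mp h2').1⟩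
      · obtain ⟨h1', h2'⟩ := hHm p hp
        exact ⟨(mem_sdiff.mp h1').1, hB h2'⟩
    · -- extentDeriv = B
      unfold extentDeriv
      ext m
      rw [mem_filter]
      constructor
      · rintro ⟨hm, hall⟩
        by_contra hmB
        have hmC : m ∈ Gᶜ \ B := mem_sdiff.mpr ⟨hm, hmB⟩
        obtain ⟨a, haA, haF⟩ := hFc m hmC
        have := hall a haA
        rcases mem_union.mp this with hp | hp
        · rcases mem_union.mp hp with hp | hp
          · rcases mem_union.mp hp with hp | hp
            · exact hmB (mem_product.mp hp).2
            · exact (mem_sdiff.mp (hJm _ hp).1).2 haA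
          · exact haF hp
        · exact hmB (hHm _ hp).2
      · intro hm
        refine ⟨hB hm, fun a haA => ?_⟩
        exact mem_union_left _ (mem_union_left _ (mem_union_left _
          (mem_product.mpr ⟨haA, hm⟩)))
    · -- intentDeriv = A
      unfold intentDeriv
      ext g
      rw [mem_filter]
      constructor
      · rintro ⟨hg, hall⟩
        by_contra hgA
        have hgC : g ∈ G \ A := mem_sdiff.mpr ⟨hg, hgA⟩
        obtain ⟨b, hbB, hbH⟩ := hHc g hgC
        have := hall b hbB
        rcases mem_union.mp this with hp | hp
        · rcases mem_union.mp hp with hp | hp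
          · rcases mem_union.mp hp with hp | hp
            · exact hgA (mem_product.mp hp).1
            · exact (mem_sdiff.mp (hJm _ hp).2).2 hbB
          · exact hgA (hFm _ hp).1
        · exact hbH hp
      · intro hg
        refine ⟨hA hg, fun b hbB => ?_⟩
        exact mem_union_left _ (mem_union_left _ (mem_union_left _
          (mem_product.mpr ⟨hg, hbB⟩)))
  · -- injectivity
    rintro ⟨J₁, F₁, H₁⟩ hx ⟨J₂, F₂, H₂⟩ hy heq
    simp only [mem_coe, mem_product] at hx hy
    beta_reduce at heq
    obtain ⟨hJ₁, hF₁, hH₁⟩ := hx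
    obtain ⟨hJ₂, hF₂, hH₂⟩ := hy
    have hJ₁' : J₁ ⊆ blkJ := mem_powerset.mp hJ₁
    have hJ₂' : J₂ ⊆ blkJ := mem_powerset.mp hJ₂
    have hF₁' : F₁ ⊆ blkF := mem_powerset.mp (mem_filter.mp hF₁).1
    have hF₂' : F₂ ⊆ blkF := mem_powerset.mp (mem_filter.mp hF₂).1
    have hH₁' : H₁ ⊆ blkH := mem_powerset.mp (mem_filter.mp hH₁).1
    have hH₂' : H₂ ⊆ blkH := mem_powerset.mp (mem_filter.mp hH₂).1
    -- generic recovery argument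
    have recover : ∀ (J F H : Finset (Fin n × Fin n)), J ⊆ blkJ → F ⊆ blkF → H ⊆ blkH →
        (A ×ˢ B ∪ J ∪ F ∪ H) ∩ blkJ = J ∧ (A ×ˢ B ∪ J ∪ F ∪ H) ∩ blkF = F ∧
        (A ×ˢ B ∪ J ∪ F ∪ H) ∩ blkH = H := by
      intro J F H hJ hF hH
      have dAB : ∀ p ∈ A ×ˢ B, p.1 ∈ A ∧ p.2 ∈ B := fun p hp => mem_product.mp hp
      have dJ : ∀ p ∈ J, (p.1 ∈ G ∧ p.1 ∉ A) ∧ (p.2 ∈ Gᶜ ∧ p.2 ∉ B) := by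
        intro p hp
        have := mem_product.mp (hJ hp)
        exact ⟨mem_sdiff.mp this.1, mem_sdiff.mp this.2⟩
      have dF : ∀ p ∈ F, p.1 ∈ A ∧ (p.2 ∈ Gᶜ ∧ p.2 ∉ B) := by
        intro p hp
        have := mem_product.mp (hF hp)
        exact ⟨this.1, mem_sdiff.mp this.2⟩
      have dH : ∀ p ∈ H, (p.1 ∈ G ∧ p.1 ∉ A) ∧ p.2 ∈ B := by
        intro p hp
        have := mem_product.mp (hH hp)
        exact ⟨mem_sdiff.mp this.1, this.2⟩
      refine ⟨?_, ?_, ?_⟩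
      · ext p
        rw [mem_inter, hblkJ, mem_product, mem_sdiff, mem_sdiff]
        constructor
        · rintro ⟨hp, hp1, hp2⟩
          rcases mem_union.mp hp with hp | hp
          · rcases mem_union.mp hp with hp | hp
            · rcases mem_union.mp hp with hp | hp
              · exact absurd (dAB p hp).1 hp1.2
              · exact hp
            · exact absurd (dF p hp).1 hp1.2
          · exact absurd (dH p hp).2 hp2.2
        · intro hp
          exact ⟨mem_union_left _ (mem_union_left _ (mem_union_right _ hp)),
            (dJ p hp).1, (dJ p hp).2⟩
      · ext p
        rw [mem_inter, hblkF, mem_product, mem_sdiff]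
        constructor
        · rintro ⟨hp, hp1, hp2⟩
          rcases mem_union.mp hp with hp | hp
          · rcases mem_union.mp hp with hp | hp
            · rcases mem_union.mp hp with hp | hp
              · exact absurd (dAB p hp).2 hp2.2
              · exact absurd hp1 (dJ p hp).1.2
            · exact hp
          · exact absurd hp1 (dH p hp).1.2
        · intro hp
          exact ⟨mem_union_left _ (mem_union_right _ hp), (dF p hp).1, (dF p hp).2⟩
      · ext p
        rw [mem_inter, hblkH, mem_product, mem_sdiff]
        constructor
        · rintro ⟨hp, hp1, hp2⟩
          rcases mem_union.mp hp with hp | hp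
          · rcases mem_union.mp hp with hp | hp
            · rcases mem_union.mp hp with hp | hp
              · exact absurd (dAB p hp).1 hp1.2
              · exact absurd hp2 (dJ p hp).2.2
            · exact absurd (dF p hp).1 hp1.2
          · exact hp
        · intro hp
          exact ⟨mem_union_right _ hp, (dH p hp).1, (dH p hp).2⟩
    obtain ⟨r1, r2, r3⟩ := recover J₁ F₁ H₁ hJ₁' hF₁' hH₁'
    obtain ⟨s1, s2, s3⟩ := recover J₂ F₂ H₂ hJ₂' hF₂' hH₂'
    have e1 : J₁ = J₂ := by rw [← r1, ← s1, heq]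
    have e2 : F₁ = F₂ := by rw [← r2, ← s2, heq]
    have e3 : H₁ = H₂ := by rw [← r3, ← s3, heq]
    simp [e1, e2, e3]

lemma innerSumSwap (n : ℕ) (G : Finset (Fin n)) (S : Finset (Finset (Fin n) × Finset (Fin n))) :
    ∑ AB ∈ S, ((G ×ˢ Gᶜ).powerset.filter fun I => IsConcept n G I AB.1 AB.2).card
      ≤ ∑ I ∈ (G ×ˢ Gᶜ).powerset, numConcepts n G I := by
  classical
  calc ∑ AB ∈ S, ((G ×ˢ Gᶜ).powerset.filter fun I => IsConcept n G I AB.1 AB.2).card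
      = ∑ AB ∈ S, ∑ I ∈ (G ×ˢ Gᶜ).powerset, (if IsConcept n G I AB.1 AB.2 then 1 else 0) := by
        refine Finset.sum_congr rfl fun AB _ => ?_
        rw [Finset.card_filter]
    _ = ∑ I ∈ (G ×ˢ Gᶜ).powerset, ∑ AB ∈ S, (if IsConcept n G I AB.1 AB.2 then 1 else 0) :=
        Finset.sum_comm
    _ ≤ ∑ I ∈ (G ×ˢ Gᶜ).powerset, numConcepts n G I := by
        refine Finset.sum_le_sum fun I _ => ?_
        rw [← Finset.card_filter]
        unfold numConcepts
        exact Finset.card_le_card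
          ((Finset.filter_subset_filter _ (Finset.subset_univ S)).trans (by
            apply Finset.subset_of_eq
            congr))

lemma per_G (n k : ℕ) (G : Finset (Fin n)) :
    (G.card.choose k) * ((Gᶜ.card).choose k) *
      (2 ^ ((G.card - k) * (Gᶜ.card - k)) *
        (2 ^ k - 1) ^ ((Gᶜ.card - k) + (G.card - k)))
      ≤ ∑ I ∈ (G ×ˢ Gᶜ).powerset, numConcepts n G I := by
  classical
  set S := (G.powersetCard k) ×ˢ (Gᶜ.powersetCard k) with hS
  have hcardS : S.card = (G.card.choose k) * ((Gᶜ.card).choose k) := by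
    rw [hS, Finset.card_product, Finset.card_powersetCard, Finset.card_powersetCard]
  have hstep : ∀ AB ∈ S,
      2 ^ ((G.card - k) * (Gᶜ.card - k)) * (2 ^ k - 1) ^ ((Gᶜ.card - k) + (G.card - k))
        ≤ ((G ×ˢ Gᶜ).powerset.filter fun I => IsConcept n G I AB.1 AB.2).card := by
    rintro ⟨A, B⟩ hAB
    rw [hS, Finset.mem_product] at hAB
    obtain ⟨hA, hB⟩ := hAB
    obtain ⟨hAsub, hAcard⟩ := Finset.mem_powersetCard.mp hA
    obtain ⟨hBsub, hBcard⟩ := Finset.mem_powersetCard.mp hB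
    have e1 : (G \ A).card = G.card - k := by rw [Finset.card_sdiff_of_subset hAsub, hAcard]
    have e2 : (Gᶜ \ B).card = Gᶜ.card - k := by rw [Finset.card_sdiff_of_subset hBsub, hBcard]
    have := concept_count n G A B hAsub hBsub
    rw [e1, e2, hAcard, hBcard] at this
    calc 2 ^ ((G.card - k) * (Gᶜ.card - k)) * (2 ^ k - 1) ^ ((Gᶜ.card - k) + (G.card - k))
        = 2 ^ ((G.card - k) * (Gᶜ.card - k)) *
          ((2 ^ k - 1) ^ (Gᶜ.card - k) * (2 ^ k - 1) ^ (G.card - k)) := by rw [pow_add]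
      _ ≤ _ := this
  calc (G.card.choose k) * ((Gᶜ.card).choose k) *
      (2 ^ ((G.card - k) * (Gᶜ.card - k)) * (2 ^ k - 1) ^ ((Gᶜ.card - k) + (G.card - k)))
      = S.card • (2 ^ ((G.card - k) * (Gᶜ.card - k)) *
          (2 ^ k - 1) ^ ((Gᶜ.card - k) + (G.card - k))) := by rw [hcardS, smul_eq_mul]
    _ ≤ ∑ AB ∈ S, ((G ×ˢ Gᶜ).powerset.filter fun I => IsConcept n G I AB.1 AB.2).card :=
        Finset.card_nsmul_le_sum _ _ _ hstep
    _ ≤ _ := innerSumSwap n G S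

lemma kappa_half (n : ℕ) (G : Finset (Fin n)) {I : Finset (Fin n × Fin n)}
    (hI : I ∈ (G ×ˢ Gᶜ).powerset) :
    kappa n (1/2) (1/2) G I = (1/2 : ℝ) ^ (n + G.card * Gᶜ.card) := by
  unfold kappa
  have h2 : (1 - (1/2 : ℝ)) = 1/2 := by norm_num
  have hc : I.card ≤ (G ×ˢ Gᶜ).card := Finset.card_le_card (Finset.mem_powerset.mp hI)
  have hn : G.card + Gᶜ.card = n := by
    rw [Finset.card_add_card_compl, Fintype.card_fin]
  rw [h2, ← pow_add, ← pow_add, ← pow_add]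
  congr 1
  rw [Finset.card_product] at hc ⊢
  omega

lemma global_bound (n k : ℕ) :
    ((n.choose (n/2)) * ((n/2).choose k * ((n - n/2).choose k) *
        (2 ^ ((n/2 - k) * (n - n/2 - k)) * (2^k - 1) ^ ((n - n/2 - k) + (n/2 - k)))) : ℕ)
        * (1/2 : ℝ) ^ (n + (n/2) * (n - n/2))
      ≤ expectedConcepts n (1/2) (1/2) := by
  classical
  set h := n / 2 with hh
  set m := n - n / 2 with hm
  unfold expectedConcepts
  have key : ∀ G : Finset (Fin n), G.card = h →
      (((h.choose k * (m.choose k) *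
        (2 ^ ((h - k) * (m - k)) * (2^k - 1) ^ ((m - k) + (h - k)))) : ℕ) : ℝ)
        * (1/2 : ℝ) ^ (n + h * m)
        ≤ ∑ I ∈ (G ×ˢ Gᶜ).powerset, (numConcepts n G I : ℝ) * kappa n (1/2) (1/2) G I := by
    intro G hG
    have hGc : Gᶜ.card = m := by
      rw [Finset.card_compl, Fintype.card_fin, hG]
    have : ∑ I ∈ (G ×ˢ Gᶜ).powerset, (numConcepts n G I : ℝ) * kappa n (1/2) (1/2) G I
        = ((∑ I ∈ (G ×ˢ Gᶜ).powerset, numConcepts n G I : ℕ) : ℝ) * (1/2 : ℝ) ^ (n + h * m) := by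
      rw [Nat.cast_sum, Finset.sum_mul]
      refine Finset.sum_congr rfl fun I hI => ?_
      rw [kappa_half n G hI, hG, hGc]
    rw [this]
    apply mul_le_mul_of_nonneg_right _ (by positivity)
    have := per_G n k G
    rw [hG, hGc] at this
    exact_mod_cast this
  have nonneg : ∀ G : Finset (Fin n),
      0 ≤ ∑ I ∈ (G ×ˢ Gᶜ).powerset, (numConcepts n G I : ℝ) * kappa n (1/2) (1/2) G I := by
    intro G
    refine Finset.sum_nonneg fun I hI => ?_
    rw [kappa_half n G hI]
    positivity
  have hfilter : (Finset.univ.filter fun G : Finset (Fin n) => G.card = h)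
      = Finset.powersetCard h Finset.univ := by
    ext G; simp [Finset.mem_powersetCard_univ]
  calc (((n.choose h) * (h.choose k * (m.choose k) *
        (2 ^ ((h - k) * (m - k)) * (2^k - 1) ^ ((m - k) + (h - k)))) : ℕ) : ℝ)
        * (1/2 : ℝ) ^ (n + h * m)
      = ∑ _G ∈ Finset.univ.filter (fun G : Finset (Fin n) => G.card = h),
          (((h.choose k * (m.choose k) *
            (2 ^ ((h - k) * (m - k)) * (2^k - 1) ^ ((m - k) + (h - k)))) : ℕ) : ℝ)
            * (1/2 : ℝ) ^ (n + h * m) := by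
        rw [Finset.sum_const, hfilter, Finset.card_powersetCard, Finset.card_univ,
          Fintype.card_fin]
        push_cast
        ring
    _ ≤ ∑ G ∈ Finset.univ.filter (fun G : Finset (Fin n) => G.card = h),
          ∑ I ∈ (G ×ˢ Gᶜ).powerset, (numConcepts n G I : ℝ) * kappa n (1/2) (1/2) G I := by
        refine Finset.sum_le_sum fun G hG => ?_
        exact key G (Finset.mem_filter.mp hG).2
    _ ≤ ∑ G : Finset (Fin n),
          ∑ I ∈ (G ×ˢ Gᶜ).powerset, (numConcepts n G I : ℝ) * kappa n (1/2) (1/2) G I :=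
        Finset.sum_le_sum_of_subset_of_nonneg (Finset.filter_subset _ _)
          (fun G _ _ => nonneg G)

lemma two_pow_le_succ_mul_choose (n : ℕ) : 2 ^ n ≤ (n + 1) * n.choose (n / 2) := by
  calc 2 ^ n = ∑ i ∈ Finset.range (n + 1), n.choose i := (Nat.sum_range_choose n).symm
    _ ≤ (Finset.range (n + 1)).card • n.choose (n / 2) :=
        Finset.sum_le_card_nsmul _ _ _ (fun i _ => Nat.choose_le_middle i n)
    _ = (n + 1) * n.choose (n / 2) := by rw [Finset.card_range, smul_eq_mul]

lemma pow_identity (h m k n : ℕ) (hkh : k ≤ h) (hkm : k ≤ m) (hhm : h + m = n) :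
    (h - k) * (m - k) + k * ((m - k) + (h - k)) + k * k = h * m := by
  obtain ⟨a, rfl⟩ := Nat.exists_eq_add_of_le hkh
  obtain ⟨b, rfl⟩ := Nat.exists_eq_add_of_le hkm
  simp only [Nat.add_sub_cancel_left]
  ring

lemma reduced (n k : ℕ) (hn : 1 ≤ n) (hk1 : 1 ≤ k) (hkh : k ≤ n / 2)
    (h2n : 2 * n ≤ 2 ^ k) :
    (((n / 2 + 1 - k : ℕ) : ℝ) ^ k / (k.factorial : ℝ)) ^ 2 * (1 / 2 : ℝ) ^ (k * k + 1)
        / ((n : ℝ) + 1)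
      ≤ expectedConcepts n (1 / 2) (1 / 2) := by
  have hmain := global_bound n k
  set h := n / 2 with hh
  set m := n - n / 2 with hm
  have hkm : k ≤ m := by omega
  have hhm : h + m = n := by omega
  have hx : (0:ℝ) < 2 ^ k := by positivity
  -- Bernoulli bound for the (2^k - 1) factor
  have hcast : ((2 ^ k - 1 : ℕ) : ℝ) = 2 ^ k - 1 := by
    push_cast [Nat.one_le_two_pow]
    ring
  have hbern : (1 / 2 : ℝ) * (2 : ℝ) ^ (k * ((m - k) + (h - k)))
      ≤ ((2 ^ k - 1 : ℕ) : ℝ) ^ ((m - k) + (h - k)) := by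
    set t := (m - k) + (h - k) with ht
    have htn : t ≤ n := by omega
    have h1 : ((2 ^ k - 1 : ℕ) : ℝ) = (2 : ℝ) ^ k * (1 - ((2:ℝ) ^ k)⁻¹) := by
      rw [hcast, mul_sub, mul_inv_cancel₀ (ne_of_gt hx), mul_one]
    have h2 : (1 / 2 : ℝ) ≤ (1 - ((2:ℝ) ^ k)⁻¹) ^ t := by
      have hb := one_add_mul_le_pow (a := -((2:ℝ) ^ k)⁻¹) (by
        have : ((2:ℝ) ^ k)⁻¹ ≤ 1 := by
          rw [inv_le_one_iff₀]; right; exact one_le_pow₀ (by norm_num)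
        linarith) t
      have h3 : 1 - (t : ℝ) * ((2:ℝ) ^ k)⁻¹ ≥ 1 / 2 := by
        have h4 : (t : ℝ) * ((2:ℝ) ^ k)⁻¹ ≤ 1 / 2 := by
          rw [mul_inv_le_iff₀ hx]
          have : (2:ℝ) * n ≤ 2 ^ k := by exact_mod_cast h2n
          have : (t:ℝ) ≤ n := by exact_mod_cast htn
          linarith
        linarith
      calc (1/2 : ℝ) ≤ 1 - (t : ℝ) * ((2:ℝ) ^ k)⁻¹ := h3
        _ = 1 + (t : ℝ) * (-((2:ℝ) ^ k)⁻¹) := by ring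
        _ ≤ (1 + -((2:ℝ) ^ k)⁻¹) ^ t := hb
        _ = (1 - ((2:ℝ) ^ k)⁻¹) ^ t := by ring_nf
    calc (1 / 2 : ℝ) * (2 : ℝ) ^ (k * t)
        = (2 : ℝ) ^ (k * t) * (1/2) := by ring
      _ ≤ (2 : ℝ) ^ (k * t) * (1 - ((2:ℝ) ^ k)⁻¹) ^ t := by
          apply mul_le_mul_of_nonneg_left h2 (by positivity)
      _ = ((2:ℝ) ^ k * (1 - ((2:ℝ) ^ k)⁻¹)) ^ t := by
          rw [mul_pow, ← pow_mul]
      _ = ((2 ^ k - 1 : ℕ) : ℝ) ^ t := by rw [h1]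
  -- power-of-two algebra
  have hpowalg : (2:ℝ) ^ ((h - k) * (m - k)) * ((1 / 2 : ℝ) * (2 : ℝ) ^ (k * ((m - k) + (h - k))))
      * (1 / 2 : ℝ) ^ (n + h * m) = (1/2 : ℝ) ^ n * (1/2 : ℝ) ^ (k * k + 1) := by
    have hid := pow_identity h m k n hkh hkm hhm
    rw [one_div, inv_pow, inv_pow]
    field_simp
    have e : n + h * m = ((h - k) * (m - k) + k * (m - k + (h - k)) + n) + k * k := by
      rw [← hid]; ring
    rw [e, pow_add (2:ℝ) _ (k * k), pow_succ (1/2:ℝ) (k * k), one_div_pow]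
    have hz : (2:ℝ) ^ (k * k) ≠ 0 := by positivity
    field_simp
    rw [pow_add, pow_add]
  -- binomial lower bounds
  have hc1 : 1 / ((n:ℝ) + 1) ≤ (n.choose h : ℝ) * (1/2 : ℝ) ^ n := by
    have h2 : ((2:ℕ)^n : ℝ) ≤ ((n:ℝ) + 1) * (n.choose h : ℝ) := by
      exact_mod_cast two_pow_le_succ_mul_choose n
    have h3 : (n.choose h : ℝ) * (1/2 : ℝ) ^ n = (n.choose h : ℝ) / (2:ℝ)^n := by
      rw [one_div, inv_pow, div_eq_mul_inv]
    rw [h3, div_le_div_iff₀ (by positivity) (by positivity)]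
    push_cast at h2 ⊢
    linarith
  have hc2 : ((h + 1 - k : ℕ) : ℝ) ^ k / (k.factorial : ℝ) ≤ (h.choose k : ℝ) := by
    have := Nat.pow_le_choose (α := ℝ) k h
    exact_mod_cast this
  have hc3 : ((h + 1 - k : ℕ) : ℝ) ^ k / (k.factorial : ℝ) ≤ (m.choose k : ℝ) := by
    refine hc2.trans ?_
    exact_mod_cast Nat.choose_le_choose k (by omega : h ≤ m)
  have hxnn : (0:ℝ) ≤ ((h + 1 - k : ℕ) : ℝ) ^ k / (k.factorial : ℝ) := by positivity
  calc (((h + 1 - k : ℕ) : ℝ) ^ k / (k.factorial : ℝ)) ^ 2 * (1 / 2 : ℝ) ^ (k * k + 1)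
        / ((n : ℝ) + 1)
      = 1 / ((n:ℝ)+1) * ((((h + 1 - k : ℕ) : ℝ) ^ k / (k.factorial : ℝ))
          * (((h + 1 - k : ℕ) : ℝ) ^ k / (k.factorial : ℝ))) * (1/2 : ℝ) ^ (k*k+1) := by
        ring
    _ ≤ ((n.choose h : ℝ) * (1/2 : ℝ) ^ n) * ((h.choose k : ℝ) * (m.choose k : ℝ))
          * (1/2 : ℝ) ^ (k*k+1) := by
        gcongr
    _ = (n.choose h : ℝ) * ((h.choose k : ℝ) * (m.choose k : ℝ))
          * ((1/2 : ℝ) ^ n * (1/2 : ℝ) ^ (k*k+1)) := by ring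
    _ = (n.choose h : ℝ) * ((h.choose k : ℝ) * (m.choose k : ℝ))
          * ((2:ℝ) ^ ((h - k) * (m - k)) * ((1 / 2 : ℝ) * (2 : ℝ) ^ (k * ((m - k) + (h - k))))
            * (1 / 2 : ℝ) ^ (n + h * m)) := by rw [hpowalg]
    _ ≤ (n.choose h : ℝ) * ((h.choose k : ℝ) * (m.choose k : ℝ))
          * ((2:ℝ) ^ ((h - k) * (m - k)) * ((2 ^ k - 1 : ℕ) : ℝ) ^ ((m - k) + (h - k))
            * (1 / 2 : ℝ) ^ (n + h * m)) := by
        gcongr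
    _ = (↑(n.choose h * (h.choose k * m.choose k *
          (2 ^ ((h - k) * (m - k)) * (2 ^ k - 1) ^ ((m - k) + (h - k))))) : ℝ)
          * (1/2 : ℝ) ^ (n + h * m) := by
        push_cast
        ring
    _ ≤ expectedConcepts n (1/2) (1/2) := hmain

lemma sq_le_two_pow {j : ℕ} (hj : 5 ≤ j) : j * j ≤ 2 ^ j := by
  induction j, hj using Nat.le_induction with
  | base => norm_num
  | succ j hj ih =>
    have h1 : 3 * j ≤ j * j := Nat.mul_le_mul_right j (by omega)
    have h2 : 2 ^ (j + 1) = 2 * 2 ^ j := by rw [pow_succ]; ring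
    have h3 : (j + 1) * (j + 1) = j * j + 2 * j + 1 := by ring
    omega

lemma nat_facts (n : ℕ) (hn : 2 ^ 20 ≤ n) :
    2 * n ≤ 2 ^ (Nat.clog 2 n + 1) ∧ 2 ^ (Nat.clog 2 n + 1) ≤ 4 * n ∧
      20 ≤ Nat.clog 2 n + 1 ∧ Nat.clog 2 n + 1 ≤ n / 4 ∧
      n ≤ 8 * (n / 2 + 1 - (Nat.clog 2 n + 1)) ∧ Nat.clog 2 n + 1 ≤ n / 2 := by
  have hn2 : 1 < n := lt_of_lt_of_le (by norm_num) hn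
  set c := Nat.clog 2 n with hc
  set k := c + 1 with hk
  have f1 : n ≤ 2 ^ c := Nat.le_pow_clog (by norm_num) n
  have f2 : 2 * n ≤ 2 ^ k := by
    rw [hk, pow_succ]
    omega
  have hc1 : 1 ≤ c := by
    by_contra hcon
    have : c = 0 := by omega
    rw [this] at f1
    simp at f1
    omega
  have f3 : 2 ^ k ≤ 4 * n := by
    have hlt : 2 ^ (c - 1) < n := by
      have := Nat.pow_pred_clog_lt_self (b := 2) (by norm_num) hn2
      simpa [Nat.pred_eq_sub_one, ← hc] using this
    have e1 : 2 ^ k = 2 * 2 ^ c := by rw [hk, pow_succ]; ring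
    have e2 : 2 ^ c = 2 ^ (c - 1) * 2 := by
      have hcc : c - 1 + 1 = c := by omega
      rw [← pow_succ, hcc]
    omega
  have f4 : 20 ≤ k := by
    have h20 : (2:ℕ) ^ 20 ≤ 2 ^ c := le_trans hn f1
    have := (Nat.pow_le_pow_iff_right (by norm_num : 1 < 2)).mp h20
    omega
  have f5 : k * k ≤ 4 * n := le_trans (sq_le_two_pow (by omega)) f3
  have f6 : k ≤ n / 4 := by
    by_contra hcon
    set d := n / 4 with hd
    have hd16 : 16 ≤ d := by
      have : 2^20 / 4 ≤ d := Nat.div_le_div_right hn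
      norm_num at this
      omega
    have hkd : d + 1 ≤ k := by omega
    have hkk : (d + 1) * (d + 1) ≤ k * k := Nat.mul_le_mul hkd hkd
    have hdd : 16 * d ≤ d * d := Nat.mul_le_mul_right d hd16
    have hexp : (d + 1) * (d + 1) = d * d + 2 * d + 1 := by ring
    have hn4 : n ≤ 4 * d + 3 := by omega
    omega
  refine ⟨f2, f3, f4, f6, by omega, by omega⟩

lemma ev_loglog : ∀ᶠ y : ℝ in Filter.atTop, Real.log (2 * y + 2) ≤ y / 100 := by
  have h := Asymptotics.IsLittleO.def Real.isLittleO_log_id_atTop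
    (by norm_num : (0:ℝ) < 1/500)
  rw [Filter.eventually_atTop] at h ⊢
  obtain ⟨z₀, hz⟩ := h
  refine ⟨max z₀ 1, fun y hy => ?_⟩
  have hy1 : (1:ℝ) ≤ y := le_trans (le_max_right _ _) hy
  have hyz : z₀ ≤ 2 * y + 2 := by
    have := le_trans (le_max_left _ _) hy
    linarith
  have hb := hz _ hyz
  simp only [Real.norm_eq_abs, id] at hb
  have habs : |2 * y + 2| = 2 * y + 2 := abs_of_pos (by linarith)
  have hle : Real.log (2 * y + 2) ≤ |Real.log (2 * y + 2)| := le_abs_self _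
  rw [habs] at hb
  linarith



/-- For `K_n ~ κ_{n,1/2,1/2}`, the expected number of formal concepts
satisfies `E[|𝔅(K_n)|] > n^{log n}` for all sufficiently large `n`. -/
theorem expected_concepts_gt_superpolynomial :
    ∀ᶠ n : ℕ in Filter.atTop,
      expectedConcepts n (1 / 2) (1 / 2) > (n : ℝ) ^ Real.log n := by
  have Ev1 : ∀ᶠ n : ℕ in Filter.atTop, (1000:ℝ) ≤ Real.log n :=
    (Real.tendsto_log_atTop.comp tendsto_natCast_atTop_atTop).eventually_ge_atTop 1000
  have Ev2 : ∀ᶠ n : ℕ in Filter.atTop,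
      Real.log (2 * Real.log n + 2) ≤ Real.log n / 100 :=
    (Real.tendsto_log_atTop.comp tendsto_natCast_atTop_atTop).eventually ev_loglog
  filter_upwards [Filter.eventually_ge_atTop (2 ^ 20 : ℕ), Ev1, Ev2] with n hn hL1000 hLL
  obtain ⟨f2, f3, f4, f6, f7, f8⟩ := nat_facts n hn
  set k := Nat.clog 2 n + 1 with hk
  have hn1 : 1 ≤ n := le_trans (by norm_num) hn
  have hred := reduced n k hn1 (by omega) f8 f2
  set Z := (((n / 2 + 1 - k : ℕ) : ℝ) ^ k / (k.factorial : ℝ)) ^ 2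
      * (1 / 2 : ℝ) ^ (k * k + 1) / ((n : ℝ) + 1) with hZ
  -- positivity facts
  have hnR : (0:ℝ) < n := by exact_mod_cast hn1
  have hx1 : 1 ≤ n / 2 + 1 - k := by omega
  have hxR : (0:ℝ) < ((n / 2 + 1 - k : ℕ) : ℝ) := by exact_mod_cast hx1
  have hkf : (0:ℝ) < (k.factorial : ℝ) := by exact_mod_cast k.factorial_pos
  have hZpos : 0 < Z := by
    rw [hZ]; positivity
  have hrpos : (0:ℝ) < (n : ℝ) ^ Real.log n := Real.rpow_pos_of_pos hnR _
  refine lt_of_lt_of_le ?_ hred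
  rw [← Real.log_lt_log_iff hrpos hZpos]
  -- abbreviations
  set L := Real.log n with hL
  set K := (k : ℝ) with hK
  have hK20 : (20:ℝ) ≤ K := by rw [hK]; exact_mod_cast f4
  have hKpos : (0:ℝ) < K := by linarith
  have hlog2_lt : Real.log 2 < 0.6931471808 := Real.log_two_lt_d9
  have hlog2_gt : 0.6931471803 < Real.log 2 := Real.log_two_gt_d9
  have hlog2pos : 0 < Real.log 2 := by linarith
  -- A1 : L ≤ K * log 2
  have hA1 : L ≤ K * Real.log 2 := by
    have h1 : (n:ℝ) ≤ (2:ℝ) ^ k := by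
      have : (2*n : ℕ) ≤ 2 ^ k := f2
      have h2 : ((2*n : ℕ) : ℝ) ≤ ((2 ^ k : ℕ) : ℝ) := by exact_mod_cast this
      push_cast at h2
      linarith
    calc L ≤ Real.log ((2:ℝ) ^ k) := Real.log_le_log hnR h1
      _ = K * Real.log 2 := by rw [Real.log_pow]
  -- A2 : K * log 2 ≤ L + 2 * log 2
  have hA2 : K * Real.log 2 ≤ L + 2 * Real.log 2 := by
    have h1 : ((2:ℝ)) ^ k ≤ 4 * n := by
      have h2 : ((2 ^ k : ℕ) : ℝ) ≤ ((4 * n : ℕ) : ℝ) := by exact_mod_cast f3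
      push_cast at h2
      linarith
    have h3 : Real.log ((2:ℝ) ^ k) ≤ Real.log (4 * n) := Real.log_le_log (by positivity) h1
    rw [Real.log_pow] at h3
    have h4 : Real.log (4 * (n:ℝ)) = Real.log 4 + L := Real.log_mul (by norm_num) (ne_of_gt hnR)
    have h5 : Real.log 4 = 2 * Real.log 2 := by
      rw [show (4:ℝ) = 2 ^ 2 by norm_num, Real.log_pow]
      push_cast
      ring
    rw [h4, h5] at h3
    linarith
  -- K bounds
  have hm1 : K * Real.log 2 < K * (7/10) := by
    apply mul_lt_mul_of_pos_left (by linarith) hKpos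
  have hm2 : K * (6931/10000) < K * Real.log 2 := by
    apply mul_lt_mul_of_pos_left (by linarith) hKpos
  have hKup : K ≤ (3/2) * L := by linarith
  have hKlow : (10/7) * L ≤ K := by linarith
  -- A3 : log x ≥ L - 3 log 2
  have hA3 : L - 3 * Real.log 2 ≤ Real.log ((n / 2 + 1 - k : ℕ) : ℝ) := by
    have h1 : (n:ℝ) / 8 ≤ ((n / 2 + 1 - k : ℕ) : ℝ) := by
      have h2 : (n : ℝ) ≤ ((8 * (n / 2 + 1 - k) : ℕ) : ℝ) := by exact_mod_cast f7
      push_cast at h2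
      linarith
    calc L - 3 * Real.log 2 = Real.log n - Real.log 8 := by
          rw [show (8:ℝ) = 2 ^ 3 by norm_num, Real.log_pow]
          push_cast
          ring
      _ = Real.log ((n:ℝ) / 8) := (Real.log_div (ne_of_gt hnR) (by norm_num)).symm
      _ ≤ _ := Real.log_le_log (by positivity) h1
  -- A4 : log k! ≤ K log K
  have hA4 : Real.log (k.factorial : ℝ) ≤ K * Real.log K := by
    have h1 : (k.factorial : ℝ) ≤ K ^ k := by
      rw [hK]
      have := Nat.factorial_le_pow k
      exact_mod_cast this
    calc Real.log (k.factorial : ℝ) ≤ Real.log (K ^ k) := Real.log_le_log hkf h1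
      _ = K * Real.log K := by rw [Real.log_pow]
  -- A5 : log K ≤ L / 100
  have hA5 : Real.log K ≤ L / 100 := by
    have h1 : K ≤ 2 * L + 2 := by linarith
    calc Real.log K ≤ Real.log (2 * L + 2) := Real.log_le_log hKpos h1
      _ ≤ L / 100 := hLL
  have hlogKnonneg : 0 ≤ Real.log K := Real.log_nonneg (by linarith)
  -- A6 : log (n+1) ≤ L + 1
  have hA6 : Real.log ((n:ℝ) + 1) ≤ L + 1 := by
    have h1 : (n:ℝ) + 1 ≤ 2 * n := by linarith [show (1:ℝ) ≤ n from by exact_mod_cast hn1]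
    calc Real.log ((n:ℝ) + 1) ≤ Real.log (2 * n) := Real.log_le_log (by linarith) h1
      _ = Real.log 2 + L := Real.log_mul (by norm_num) (ne_of_gt hnR)
      _ ≤ L + 1 := by linarith
  -- compute log Z
  have hZlog : Real.log Z = 2 * ((k:ℝ) * Real.log ((n / 2 + 1 - k : ℕ) : ℝ)
      - Real.log (k.factorial : ℝ)) - ((k:ℝ) * (k:ℝ) + 1) * Real.log 2
      - Real.log ((n:ℝ) + 1) := by
    rw [hZ]
    rw [Real.log_div (by positivity) (by positivity),
      Real.log_mul (by positivity) (by positivity),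
      Real.log_pow, Real.log_pow,
      Real.log_div (by positivity) (ne_of_gt hkf),
      Real.log_pow]
    have : Real.log (1/2) = -Real.log 2 := by
      rw [one_div, Real.log_inv]
    rw [this]
    push_cast
    ring
  -- log of RHS
  have hRlog : Real.log ((n : ℝ) ^ L) = L * L := by
    rw [Real.log_rpow hnR]
  rw [hRlog, hZlog]
  -- final arithmetic
  set lx := Real.log ((n / 2 + 1 - k : ℕ) : ℝ) with hlx
  set lf := Real.log (k.factorial : ℝ) with hlf
  set lK := Real.log K with hlK
  have hlfK : lf ≤ K * lK := hA4
  have hKlK : K * lK ≤ (3/2) * L * (L / 100) := by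
    apply mul_le_mul hKup hA5 hlogKnonneg (by linarith)
  have hKlx : K * (L - 3 * Real.log 2) ≤ K * lx :=
    mul_le_mul_of_nonneg_left hA3 (le_of_lt hKpos)
  have hKK : K * (K * Real.log 2) ≤ K * (L + 2 * Real.log 2) :=
    mul_le_mul_of_nonneg_left hA2 (le_of_lt hKpos)
  have hKLlow : (10/7) * (L * L) ≤ K * L := by nlinarith
  have hKL2 : K * (2 * Real.log 2) ≤ (3/2) * L * (7/5) := by nlinarith
  have hK3log2 : K * (3 * Real.log 2) ≤ (3/2) * L * (21/10) := by nlinarith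
  have hL0 : (0:ℝ) < L := by linarith
  nlinarith [hKlx, hKK, hKLlow, hKL2, hK3log2, hKlK, hlfK, hA6, hL1000]
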